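/- Let E_1,…,E_n be quantum operations on ℂ^d such that for some pair i ≠ j, supp(E_i) ⊆ supp(E_j). Then for every N ≥ 1, the operations cannot be unambiguously discriminated by N uses: for every ancilla dimension d_a and every vector ψ ∈ (ℂ^d)^{⊗N} ⊗ ℂ^{d_a}, the output states (E_k^{⊗N} ⊗ I)(|ψ⟩⟨ψ|), k = 1,…,n, are not unambiguously distinguishable. -/

import Mathlib

open Matrix Kronecker
open scoped ComplexOrder

noncomputable section

/-- A quantum operation on ℂ^d given by a finite family of Kraus operators
satisfying the completeness condition. -/
structure QuantumOp (d : ℕ) where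
  m : ℕ
  K : Fin m → Matrix (Fin d) (Fin d) ℂ
  complete : ∑ k, (K k)ᴴ * K k = 1

/-- The support of a quantum operation: the span of its Kraus operators. -/
def QuantumOp.supp {d : ℕ} (E : QuantumOp d) : Submodule ℂ (Matrix (Fin d) (Fin d) ℂ) :=
  Submodule.span ℂ (Set.range E.K)

/-- The output state (E ⊗ I)(|ψ⟩⟨ψ|) = Σ_k (E^k ⊗ I)|ψ⟩⟨ψ|(E^k ⊗ I)†. -/
def QuantumOp.output {d : ℕ} (E : QuantumOp d) (da : ℕ) (ψ : Fin d × Fin da → ℂ) :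
    Matrix (Fin d × Fin da) (Fin d × Fin da) ℂ :=
  ∑ k, (E.K k ⊗ₖ (1 : Matrix (Fin da) (Fin da) ℂ)) * vecMulVec ψ (star ψ) *
    (E.K k ⊗ₖ (1 : Matrix (Fin da) (Fin da) ℂ))ᴴ

/-- States σ_1, …, σ_n are unambiguously distinguishable if there is a POVM
{Π_0, Π_1, …, Π_n} with tr(Π_i σ_j) = 0 for i ≠ j and tr(Π_i σ_i) > 0. -/
def UnambiguouslyDistinguishable {μ : Type*} [Fintype μ] [DecidableEq μ] {n : ℕ}
    (σ : Fin n → Matrix μ μ ℂ) : Prop :=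
  ∃ P0 : Matrix μ μ ℂ, ∃ P : Fin n → Matrix μ μ ℂ,
    P0.PosSemidef ∧ (∀ i, (P i).PosSemidef) ∧
    (P0 + ∑ i, P i = 1) ∧
    (∀ i j, i ≠ j → (P i * σ j).trace = 0) ∧
    (∀ i, 0 < (P i * σ i).trace)

/-- N-fold Kronecker (tensor) power of a family of matrices, indexed by the
choices of one factor for each of the N slots. -/
def krausPow {d m : ℕ} (K : Fin m → Matrix (Fin d) (Fin d) ℂ) (N : ℕ)
    (ks : Fin N → Fin m) : Matrix (Fin N → Fin d) (Fin N → Fin d) ℂ :=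
  fun a b => ∏ t, K (ks t) (a t) (b t)

/-- The output state (E^{⊗N} ⊗ I)(|ψ⟩⟨ψ|). -/
def QuantumOp.outputPow {d : ℕ} (E : QuantumOp d) (N da : ℕ)
    (ψ : (Fin N → Fin d) × Fin da → ℂ) :
    Matrix ((Fin N → Fin d) × Fin da) ((Fin N → Fin d) × Fin da) ℂ :=
  ∑ ks : Fin N → Fin E.m,
    (krausPow E.K N ks ⊗ₖ (1 : Matrix (Fin da) (Fin da) ℂ)) * vecMulVec ψ (star ψ) *
      (krausPow E.K N ks ⊗ₖ (1 : Matrix (Fin da) (Fin da) ℂ))ᴴ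

lemma term_eq {μ : Type*} [Fintype μ] [DecidableEq μ]
    (A : Matrix μ μ ℂ) (ψ : μ → ℂ) :
    A * vecMulVec ψ (star ψ) * Aᴴ = vecMulVec (A *ᵥ ψ) (star (A *ᵥ ψ)) := by
  ext a b
  simp only [mul_apply, vecMulVec_apply, conjTranspose_apply, mulVec, dotProduct,
    Pi.star_apply, star_sum, star_mul', Finset.sum_mul, Finset.mul_sum]
  refine Finset.sum_congr rfl fun e _ => Finset.sum_congr rfl fun f _ => ?_
  ring

lemma trace_vmv {μ : Type*} [Fintype μ] [DecidableEq μ]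
    (P : Matrix μ μ ℂ) (w : μ → ℂ) :
    (P * vecMulVec w (star w)).trace = star w ⬝ᵥ P *ᵥ w := by
  simp only [trace, diag_apply, mul_apply, vecMulVec_apply, Pi.star_apply, dotProduct, mulVec,
    Finset.mul_sum]
  refine Finset.sum_congr rfl fun e _ => Finset.sum_congr rfl fun f _ => ?_
  ring

lemma krausPow_expand {d mi mj N : ℕ} (Ki : Fin mi → Matrix (Fin d) (Fin d) ℂ)
    (Kj : Fin mj → Matrix (Fin d) (Fin d) ℂ) (c : Fin mi → Fin mj → ℂ)
    (hc : ∀ k, ∑ l, c k l • Kj l = Ki k) (ks : Fin N → Fin mi) :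
    krausPow Ki N ks = ∑ ls : Fin N → Fin mj, (∏ t, c (ks t) (ls t)) • krausPow Kj N ls := by
  ext a b
  have h1 : ∀ t : Fin N, Ki (ks t) (a t) (b t) = ∑ l, c (ks t) l * Kj l (a t) (b t) := by
    intro t
    rw [← hc (ks t)]
    simp [Matrix.sum_apply]
  simp only [krausPow, Finset.sum_apply, Matrix.sum_apply, Matrix.smul_apply, smul_eq_mul]
  calc (∏ t, Ki (ks t) (a t) (b t)) = ∏ t, ∑ l, c (ks t) l * Kj l (a t) (b t) :=
        Finset.prod_congr rfl fun t _ => h1 t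
    _ = ∑ ls : Fin N → Fin mj, ∏ t, c (ks t) (ls t) * Kj (ls t) (a t) (b t) :=
        Fintype.prod_sum _
    _ = ∑ ls : Fin N → Fin mj, (∏ t, c (ks t) (ls t)) * ∏ t, Kj (ls t) (a t) (b t) :=
        Finset.sum_congr rfl fun ls _ => Finset.prod_mul_distrib

lemma sum_kron {μ : Type*} [Fintype μ] {p q r s : Type*} [Fintype p]
    (f : μ → Matrix p q ℂ) (B : Matrix r s ℂ) :
    (∑ x, f x) ⊗ₖ B = ∑ x, (f x) ⊗ₖ B := by
  ext ⟨a, b⟩ ⟨e, g⟩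
  simp [kroneckerMap_apply, Matrix.sum_apply, Finset.sum_mul]

lemma sum_mulVec' {μ p q : Type*} [Fintype μ] [Fintype q] (f : μ → Matrix p q ℂ)
    (v : q → ℂ) : (∑ x, f x) *ᵥ v = ∑ x, f x *ᵥ v := by
  ext a
  simp only [mulVec, dotProduct, Matrix.sum_apply, Finset.sum_apply, Finset.sum_mul]
  exact Finset.sum_comm

lemma mulVec_sum' {μ p q : Type*} [Fintype μ] [Fintype q] (A : Matrix p q ℂ)
    (f : μ → q → ℂ) : A *ᵥ (∑ x, f x) = ∑ x, A *ᵥ f x :=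
  map_sum A.mulVecLin f Finset.univ

theorem not_unambig_by_N_uses {d n : ℕ} (E : Fin n → QuantumOp d)
    (i j : Fin n) (hij : i ≠ j) (h : (E i).supp ≤ (E j).supp) :
    ∀ N : ℕ, 1 ≤ N → ∀ (da : ℕ) (ψ : (Fin N → Fin d) × Fin da → ℂ),
      ¬ UnambiguouslyDistinguishable (fun k => (E k).outputPow N da ψ) := by
  intro N _hN da ψ hUD
  obtain ⟨P0, P, _hP0, hP, _hsum, hortho, hpos⟩ := hUD
  have hcoef : ∀ k : Fin (E i).m, ∃ c : Fin (E j).m → ℂ,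
      ∑ l, c l • (E j).K l = (E i).K k := fun k =>
    (Submodule.mem_span_range_iff_exists_fun ℂ).mp (h (Submodule.subset_span ⟨k, rfl⟩))
  choose c hc using hcoef
  set Q := P i with hQ
  -- w M := (M ⊗ I) ψ
  set w : Matrix (Fin N → Fin d) (Fin N → Fin d) ℂ → ((Fin N → Fin d) × Fin da → ℂ) :=
    fun M => (M ⊗ₖ (1 : Matrix (Fin da) (Fin da) ℂ)) *ᵥ ψ with hw
  -- trace computation
  have htr : ∀ (F : QuantumOp d),
      (Q * F.outputPow N da ψ).trace
        = ∑ ks : Fin N → Fin F.m, star (w (krausPow F.K N ks)) ⬝ᵥ Q *ᵥ w (krausPow F.K N ks) := by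
    intro F
    rw [QuantumOp.outputPow, Finset.mul_sum, trace_sum]
    refine Finset.sum_congr rfl fun ks _ => ?_
    rw [term_eq, trace_vmv]
  -- orthogonality kills all E_j vectors
  have hz : ∀ ls : Fin N → Fin (E j).m, Q *ᵥ w (krausPow (E j).K N ls) = 0 := by
    have h0 : (Q * (E j).outputPow N da ψ).trace = 0 := hortho i j hij
    rw [htr (E j)] at h0
    have hnn : ∀ ls ∈ Finset.univ (α := Fin N → Fin (E j).m),
        0 ≤ star (w (krausPow (E j).K N ls)) ⬝ᵥ Q *ᵥ w (krausPow (E j).K N ls) :=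
      fun ls _ => (hP i).dotProduct_mulVec_nonneg _
    intro ls
    have := (Finset.sum_eq_zero_iff_of_nonneg hnn).mp h0 ls (Finset.mem_univ ls)
    exact ((hP i).dotProduct_mulVec_zero_iff _).mp this
  -- hence kills all E_i vectors
  have hz' : ∀ ks : Fin N → Fin (E i).m, Q *ᵥ w (krausPow (E i).K N ks) = 0 := by
    intro ks
    rw [hw]
    simp only
    rw [krausPow_expand (E i).K (E j).K c hc ks, sum_kron, sum_mulVec', mulVec_sum']
    refine Finset.sum_eq_zero fun ls _ => ?_
    rw [smul_kronecker, smul_mulVec, mulVec_smul]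
    have := hz ls
    rw [hw] at this
    simp only at this
    rw [this, smul_zero]
  -- contradiction with positivity
  have hpos' := hpos i
  rw [← hQ] at hpos' -- maybe unnecessary
  have : (Q * (E i).outputPow N da ψ).trace = 0 := by
    rw [htr (E i)]
    exact Finset.sum_eq_zero fun ks _ => by rw [hz' ks, dotProduct_zero]
  simp only at hpos'
  rw [this] at hpos'
  exact lt_irrefl _ hpos'
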